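/- Let G be the time-invariant dynamic Bayesian network DAG of the environment and suppose the joint distribution of the variables satisfies the global Markov condition and faithfulness with respect to G. Define the minimal latent state set g_t^min ⊆ g_t by: g_{i,t} ∈ g_t^min if and only if c_i^{g→r} = 1 or g_{i,t} has a directed path in G to a future reward r_{t+k} (for some k > 0) passing through other latent state components. Then g_t^min is a minimal and sufficient representation for policy learning: (i) every latent component g_{i,t} ∉ g_t^min is conditionally independent of every future reward r_{t+k} (k > 0) given g_t^min and the action a_t, and (ii) no proper subset of g_t^min has this property, i.e., for every g_{i,t} ∈ g_t^min there exists k > 0 such that g_{i,t} is conditionally dependent on r_{t+k} given g_t^min \ {g_{i,t}} and a_t. -/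

import Mathlib

open Relation

/-- Nodes of the time-invariant dynamic Bayesian network: latent state
components `g_{i,t}`, actions `a_t`, and rewards `r_t`. -/
inductive DBNNode (d : ℕ) : Type where
  | latent (i : Fin d) (t : ℕ)
  | action (t : ℕ)
  | reward (t : ℕ)
deriving DecidableEq

/-- The fixed binary structural masks of the DBN.  `cgg i j = true` encodes the
edge `g_{j,t-1} → g_{i,t}`, `cag i` the edge `a_{t-1} → g_{i,t}`, `cgr i` the
edge `g_{i,t-1} → r_t`, and `car` the edge `a_{t-1} → r_t`. -/
structure DBNMasks (d : ℕ) where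
  cgg : Fin d → Fin d → Bool
  cag : Fin d → Bool
  cgr : Fin d → Bool
  car : Bool

/-- The directed edges of the time-invariant DBN graph `G`. -/
def DBNEdge {d : ℕ} (c : DBNMasks d) : DBNNode d → DBNNode d → Prop
  | .latent j t, .latent i t' => t' = t + 1 ∧ c.cgg i j = true
  | .action t, .latent i t' => t' = t + 1 ∧ c.cag i = true
  | .latent i t, .reward t' => t' = t + 1 ∧ c.cgr i = true
  | .action t, .reward t' => t' = t + 1 ∧ c.car = true
  | _, _ => False

/-- Undirected adjacency induced by a directed edge relation. -/
def Adj {V : Type*} (E : V → V → Prop) (x y : V) : Prop := E x y ∨ E y x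

/-- `p` is a (simple, undirected) path in the graph with edge relation `E`:
consecutive nodes are adjacent and no node repeats. -/
def IsPathList {V : Type*} (E : V → V → Prop) (p : List V) : Prop :=
  p.Chain' (Adj E) ∧ p.Nodup

/-- A path `p` is blocked by the conditioning set `Z`: it contains a
chain `u → m → v` (in either direction) or a fork `u ← m → v` with middle
node `m ∈ Z`, or a collider `u → m ← v` with `m ∉ Z` and no descendant of
`m` in `Z`. -/
def BlockedBy {V : Type*} (E : V → V → Prop) (Z : Set V) (p : List V) : Prop :=
  ∃ u m v : V, [u, m, v] <:+: p ∧
    ((((E u m ∧ E m v) ∨ (E v m ∧ E m u) ∨ (E m u ∧ E m v)) ∧ m ∈ Z) ∨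
      ((E u m ∧ E v m) ∧ m ∉ Z ∧ ∀ w : V, Relation.TransGen E m w → w ∉ Z))

/-- `Z` d-separates `X` from `Y` in the graph with edge relation `E`: every
path between a node of `X` and a node of `Y` is blocked by `Z`. -/
def DSep {V : Type*} (E : V → V → Prop) (X Y Z : Set V) : Prop :=
  ∀ x ∈ X, ∀ y ∈ Y, ∀ p : List V,
    IsPathList E p → p.head? = some x → p.getLast? = some y → BlockedBy E Z p

/-- The joint distribution (represented abstractly by its ternary conditional
independence relation `CI X Y Z`, "X ⫫ Y given Z") satisfies the global Markov
condition w.r.t. the graph: d-separation implies conditional independence. -/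
def GlobalMarkov {V : Type*} (E : V → V → Prop)
    (CI : Set V → Set V → Set V → Prop) : Prop :=
  ∀ X Y Z : Set V, Disjoint X Y → Disjoint X Z → Disjoint Y Z →
    DSep E X Y Z → CI X Y Z

/-- The joint distribution is faithful to the graph: every conditional
independence corresponds to a d-separation. -/
def FaithfulTo {V : Type*} (E : V → V → Prop)
    (CI : Set V → Set V → Set V → Prop) : Prop :=
  ∀ X Y Z : Set V, Disjoint X Y → Disjoint X Z → Disjoint Y Z →
    CI X Y Z → DSep E X Y Z

/-- `g_{i,t} ∈ g_t^min` iff `c_i^{g→r} = 1` or `g_{i,t}` has a directed path in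
`G` to a future reward `r_{t+k}` (some `k > 0`) passing through other latent
state components. -/
def InMinSet {d : ℕ} (c : DBNMasks d) (i : Fin d) (t : ℕ) : Prop :=
  c.cgr i = true ∨
    ∃ k : ℕ, 0 < k ∧ ∃ (j : Fin d) (s : ℕ),
      Relation.TransGen (DBNEdge c) (DBNNode.latent i t) (DBNNode.latent j s) ∧
      Relation.TransGen (DBNEdge c) (DBNNode.latent j s) (DBNNode.reward (t + k))

/-- The minimal latent state set `g_t^min`, as a set of nodes of `G`. -/
def MinSet {d : ℕ} (c : DBNMasks d) (t : ℕ) : Set (DBNNode d) :=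
  {n | ∃ i : Fin d, n = DBNNode.latent i t ∧ InMinSet c i t}

section Helpers
-- helpers
def tnode {d : ℕ} : DBNNode d → ℕ
  | .latent _ t => t
  | .action t => t
  | .reward t => t

variable {d : ℕ} {c : DBNMasks d}

lemma edge_time {x y : DBNNode d} (h : DBNEdge c x y) : tnode y = tnode x + 1 := by
  cases x <;> cases y <;> simp_all [DBNEdge, tnode]

lemma no_edge_to_action {x : DBNNode d} {s : ℕ} : ¬ DBNEdge c x (.action s) := by
  cases x <;> simp [DBNEdge]

lemma no_edge_from_reward {x : DBNNode d} {s : ℕ} : ¬ DBNEdge c (.reward s) x := by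
  cases x <;> simp [DBNEdge]

lemma transGen_time {x y : DBNNode d} (h : TransGen (DBNEdge c) x y) :
    tnode x < tnode y := by
  induction h with
  | single h => simp [edge_time h]
  | tail _ h ih => have := edge_time h; omega

lemma reach_inMinSet {i : Fin d} {t s : ℕ}
    (h : TransGen (DBNEdge c) (.latent i t) (.reward s)) : InMinSet c i t := by
  have hts : t < s := by simpa [tnode] using transGen_time h
  obtain ⟨w, hw, hws⟩ := (Relation.TransGen.tail'_iff).1 h
  rcases hw.cases_tail with rfl | ⟨v, hv, hvw⟩
  · exact Or.inl hws.2
  · have hxw : TransGen (DBNEdge c) (.latent i t) w := Relation.TransGen.tail' hv hvw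
    cases w with
    | reward u => exact absurd hws no_edge_from_reward
    | action u => exact absurd hvw no_edge_to_action
    | latent j u =>
      refine Or.inr ⟨s - t, by omega, j, u, hxw, ?_⟩
      have h2 : t + (s - t) = s := by omega
      rw [h2]; exact TransGen.single hws

lemma inMinSet_reach {i : Fin d} {t : ℕ} (h : InMinSet c i t) :
    ∃ k, 0 < k ∧ TransGen (DBNEdge c) (.latent i t) (.reward (t + k)) := by
  rcases h with h | ⟨k, hk, j, s, h1, h2⟩
  · exact ⟨1, one_pos, TransGen.single (show t + 1 = t + 1 ∧ _ from ⟨rfl, h⟩)⟩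
  · exact ⟨k, hk, h1.trans h2⟩

lemma tnode_of_mem_minset {t : ℕ} {m : DBNNode d} (h : m ∈ MinSet c t) : tnode m = t := by
  obtain ⟨i, rfl, -⟩ := h; rfl

lemma directed_unblocked {x y : DBNNode d} (Z : Set (DBNNode d))
    (hZ : ∀ m ∈ Z, tnode m = tnode x)
    (h : TransGen (DBNEdge c) x y) :
    ∃ p : List (DBNNode d), IsPathList (DBNEdge c) p ∧ p.head? = some x ∧
      p.getLast? = some y ∧ ¬ BlockedBy (DBNEdge c) Z p := by
  obtain ⟨l, hchain, hlast⟩ := List.exists_isChain_cons_of_relationReflTransGen h.to_reflTransGen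
  have hch' : List.Chain' (DBNEdge c) (x :: l) := hchain
  have hlt : List.Chain' (fun a b : DBNNode d => tnode a < tnode b) (x :: l) :=
    hch'.imp fun a b hab => by rw [edge_time hab]; omega
  haveI : IsTrans (DBNNode d) (fun a b : DBNNode d => tnode a < tnode b) :=
    ⟨fun _ _ _ h1 h2 => lt_trans h1 h2⟩
  have hpw : List.Pairwise (fun a b : DBNNode d => tnode a < tnode b) (x :: l) :=
    List.isChain_iff_pairwise.mp hlt
  refine ⟨x :: l, ⟨hch'.imp fun _ _ hab => Or.inl hab, ?_⟩, rfl, ?_, ?_⟩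
  · exact hpw.imp fun {a b} hab => fun e => by subst e; exact lt_irrefl _ hab
  · rw [List.getLast?_eq_getLast (List.cons_ne_nil _ _), hlast]
  · rintro ⟨u, m, v, hinf, hcase⟩
    have hc3 : List.Chain' (DBNEdge c) [u, m, v] := hch'.infix hinf
    have hum : DBNEdge c u m := (List.isChain_cons_cons.mp hc3).1
    have hmv : DBNEdge c m v := (List.isChain_cons_cons.mp (List.isChain_cons_cons.mp hc3).2).1
    -- tnode m > tnode x
    have humem : u ∈ x :: l := by
      obtain ⟨l1, l2, heq⟩ := hinf
      rw [← heq]; simp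
    have hmt : tnode x < tnode m := by
      rcases List.mem_cons.mp humem with rfl | hu
      · rw [edge_time hum]; omega
      · have := (List.pairwise_cons.mp hpw).1 u hu
        rw [edge_time hum]; omega
    have hmZ : m ∉ Z := fun hm => by have := hZ m hm; omega
    rcases hcase with ⟨-, hm⟩ | ⟨⟨-, hvm⟩, -, -⟩
    · exact hmZ hm
    · have h1 := edge_time hmv; have h2 := edge_time hvm; omega

lemma dsep_part1 {i : Fin d} {t k : ℕ} (hi : ¬ InMinSet c i t) (hk : 0 < k)
    (p : List (DBNNode d)) (hp : IsPathList (DBNEdge c) p)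
    (hhead : p.head? = some (DBNNode.latent i t))
    (hlast : p.getLast? = some (DBNNode.reward (t + k))) :
    BlockedBy (DBNEdge c) (MinSet c t ∪ {DBNNode.action t}) p := by
  classical
  set N := p.length with hN
  have hne : p ≠ [] := by rintro rfl; simp at hhead
  have hN0 : 0 < N := List.length_pos_iff.mpr hne
  set s : ℕ → DBNNode d := fun j => p.getD j (DBNNode.action 0) with hs
  set τ : ℕ → ℕ := fun j => tnode (s j) with hτ
  have hsget : ∀ j (h : j < N), s j = p[j] := fun j h => List.getD_eq_getElem p _ h
  have hs0 : s 0 = DBNNode.latent i t := by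
    rw [hsget 0 hN0]
    have := List.head?_eq_getElem? (l := p)
    rw [hhead, List.getElem?_eq_getElem hN0] at this
    exact (Option.some.inj this).symm
  have hsn : s (N - 1) = DBNNode.reward (t + k) := by
    rw [hsget (N - 1) (by omega)]
    rw [List.getLast?_eq_getLast hne, List.getLast_eq_getElem] at hlast
    exact (Option.some.inj hlast)
  have hτ0 : τ 0 = t := by rw [hτ]; simp only [hs0]; rfl
  have hτn : τ (N - 1) = t + k := by rw [hτ]; simp only [hsn]; rfl
  have hadj : ∀ j, j + 1 < N → Adj (DBNEdge c) (s j) (s (j + 1)) := by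
    intro j hj
    have := List.isChain_iff_getElem.mp hp.1 j (by omega)
    rw [hsget j (by omega), hsget (j+1) hj]
    exact this
  have hτstep : ∀ j, j + 1 < N → τ (j + 1) = τ j + 1 ∨ τ j = τ (j + 1) + 1 := by
    intro j hj
    rcases hadj j hj with h | h
    · exact Or.inl (edge_time h)
    · exact Or.inr (edge_time h)
  have hN2 : 1 < N := by
    by_contra h
    have : N - 1 = 0 := by omega
    rw [this] at hτn; omega
  have triple_infix : ∀ j, j + 2 < N → [s j, s (j + 1), s (j + 2)] <:+: p := by
    intro j hj
    rw [hsget j (by omega), hsget (j+1) (by omega), hsget (j+2) hj]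
    have hdrop : p.drop j = p[j] :: p[j+1] :: p[j+2] :: p.drop (j + 3) := by
      rw [List.drop_eq_getElem_cons (by omega : j < p.length)]
      rw [List.drop_eq_getElem_cons (by omega : j + 1 < p.length)]
      rw [List.drop_eq_getElem_cons (by omega : j + 2 < p.length)]
    have hpre : [p[j], p[j+1], p[j+2]] <+: p.drop j := ⟨p.drop (j + 3), by rw [hdrop]; rfl⟩
    exact hpre.isInfix.trans (List.drop_suffix j p).isInfix
  have hZt : ∀ m ∈ MinSet c t ∪ {DBNNode.action t}, tnode m = t := by
    rintro m (hm | hm)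
    · exact tnode_of_mem_minset hm
    · rw [hm]; rfl
  by_cases hcol : ∃ j, j + 2 < N ∧ t < τ (j + 1) ∧
      DBNEdge c (s j) (s (j + 1)) ∧ DBNEdge c (s (j + 2)) (s (j + 1))
  · obtain ⟨j, hj, hjt, h1, h2⟩ := hcol
    have hexpand : τ (j + 1) = tnode (s (j + 1)) := rfl
    refine ⟨s j, s (j + 1), s (j + 2), triple_infix j hj,
      Or.inr ⟨⟨h1, h2⟩, ?_, ?_⟩⟩
    · intro hm; have := hZt _ hm; omega
    · intro w hw hwZ
      have := transGen_time hw
      have := hZt _ hwZ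
      omega
  · push_neg at hcol
    set q := Nat.findGreatest (fun j => τ j ≤ t) (N - 1) with hq
    have hq1 : τ q ≤ t := by
      rw [hq]
      exact Nat.findGreatest_spec (P := fun j => τ j ≤ t) (m := 0) (Nat.zero_le _) (le_of_eq hτ0)
    have hq2 : ∀ m, q < m → m ≤ N - 1 → t < τ m := by
      intro m h1 h2
      have := Nat.findGreatest_is_greatest (P := fun j => τ j ≤ t) h1 h2
      omega
    have hqle : q ≤ N - 1 := Nat.findGreatest_le _
    have hqlt : q < N - 1 := by
      rcases lt_or_eq_of_le hqle with h | h
      · exact h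
      · rw [h] at hq1; omega
    have hτq : τ q = t := by
      have h1 := hτstep q (by omega)
      have h2 := hq2 (q + 1) (by omega) (by omega)
      omega
    -- all edges from q onward point forward
    have Q : ∀ j, q ≤ j → j ≤ N - 1 →
        τ j = t + (j - q) ∧ (q < j → DBNEdge c (s (j - 1)) (s j)) := by
      intro j hqj
      induction j, hqj using Nat.le_induction with
      | base => exact fun _ => ⟨by simp [hτq], fun h => absurd h (lt_irrefl q)⟩
      | succ j hqj ih =>
        intro hjn
        obtain ⟨ht1, ht2⟩ := ih (by omega)
        have hstep := hτstep j (by omega)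
        rcases hadj j (by omega) with hE | hE
        · have : τ (j + 1) = τ j + 1 := edge_time hE
          exact ⟨by omega, fun _ => by simpa using hE⟩
        · exfalso
          have hdown : τ j = τ (j + 1) + 1 := edge_time hE
          rcases Nat.eq_or_lt_of_le hqj with heq | hlt
          · have h3 := hq2 (j + 1) (by omega) hjn
            omega
          · have hE0 : DBNEdge c (s (j - 1)) (s j) := ht2 hlt
            have hcon := hcol (j - 1) (by omega)
            rw [show j - 1 + 1 = j by omega, show j - 1 + 2 = j + 1 by omega] at hcon
            exact hcon (by omega) hE0 hE
    have hfwd : ∀ j, q ≤ j → j + 1 ≤ N - 1 → DBNEdge c (s j) (s (j + 1)) := by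
      intro j h1 h2
      have := (Q (j + 1) (by omega) h2).2 (by omega)
      simpa using this
    have htrans : ∀ j, q + 1 ≤ j → j ≤ N - 1 → TransGen (DBNEdge c) (s q) (s j) := by
      intro j h1
      induction j, h1 using Nat.le_induction with
      | base => exact fun h => TransGen.single (hfwd q le_rfl h)
      | succ j h1 ih =>
        intro hj
        exact (ih (by omega)).tail (hfwd j (by omega) hj)
    have hreach : TransGen (DBNEdge c) (s q) (DBNNode.reward (t + k)) := by
      have := htrans (N - 1) (by omega) le_rfl
      rwa [hsn] at this
    -- q ≥ 1 and s q ∈ Z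
    have hτqt : tnode (s q) = t := hτq
    have hkey : s q ∈ MinSet c t ∪ {DBNNode.action t} ∧ 1 ≤ q := by
      cases hsq : s q with
      | reward u =>
        exfalso
        rw [hsq] at hreach
        obtain ⟨b, hb, -⟩ := (Relation.TransGen.head'_iff).1 hreach
        exact no_edge_from_reward hb
      | action u =>
        have hu : u = t := by rw [hsq] at hτqt; exact hτqt
        rw [hu] at hsq ⊢
        have hq0 : 1 ≤ q := by
          rcases Nat.eq_zero_or_pos q with heq | h
          · exfalso; rw [heq, hs0] at hsq; simp at hsq
          · exact h
        exact ⟨Or.inr rfl, hq0⟩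
      | latent j u =>
        have hu : u = t := by rw [hsq] at hτqt; exact hτqt
        rw [hu] at hsq ⊢
        rw [hsq] at hreach
        have hmin : InMinSet c j t := reach_inMinSet hreach
        have hq0 : 1 ≤ q := by
          rcases Nat.eq_zero_or_pos q with heq | h
          · exfalso
            rw [heq, hs0] at hsq
            injection hsq with h1 h2
            subst h1
            exact hi hmin
          · exact h
        exact ⟨Or.inl ⟨j, rfl, hmin⟩, hq0⟩
    obtain ⟨hsqZ, hq0⟩ := hkey
    have hinf := triple_infix (q - 1) (by omega)
    rw [show q - 1 + 1 = q by omega, show q - 1 + 2 = q + 1 by omega] at hinf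
    have hmv : DBNEdge c (s q) (s (q + 1)) := hfwd q le_rfl (by omega)
    refine ⟨s (q - 1), s q, s (q + 1), hinf, Or.inl ⟨?_, hsqZ⟩⟩
    have hadj' := hadj (q - 1) (by omega)
    rw [show q - 1 + 1 = q by omega] at hadj'
    rcases hadj' with h | h
    · exact Or.inl ⟨h, hmv⟩
    · exact Or.inr (Or.inr ⟨h, hmv⟩)

end Helpers

/-- **Minimal sufficient representations for policy learning.**  Under the
global Markov condition and faithfulness, (i) every latent component not in
`g_t^min` is conditionally independent of every future reward `r_{t+k}` given
`g_t^min` and `a_t`, and (ii) every member of `g_t^min` is conditionally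
dependent on some future reward given `g_t^min \ {g_{i,t}}` and `a_t`. -/
theorem minimal_sufficient_representation (d : ℕ) (c : DBNMasks d)
    (CI : Set (DBNNode d) → Set (DBNNode d) → Set (DBNNode d) → Prop)
    (hMarkov : GlobalMarkov (DBNEdge c) CI)
    (hFaithful : FaithfulTo (DBNEdge c) CI) (t : ℕ) :
    (∀ i : Fin d, ¬ InMinSet c i t → ∀ k : ℕ, 0 < k →
      CI {DBNNode.latent i t} {DBNNode.reward (t + k)}
        (MinSet c t ∪ {DBNNode.action t})) ∧
    (∀ i : Fin d, InMinSet c i t → ∃ k : ℕ, 0 < k ∧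
      ¬ CI {DBNNode.latent i t} {DBNNode.reward (t + k)}
        ((MinSet c t \ {DBNNode.latent i t}) ∪ {DBNNode.action t})) := by
  constructor
  · intro i hi k hk
    refine hMarkov _ _ _ ?_ ?_ ?_ ?_
    · exact Set.disjoint_singleton_left.mpr (by simp)
    · refine Set.disjoint_singleton_left.mpr ?_
      rintro (⟨j, hj, hmin⟩ | h)
      · injection hj with h1 h2; subst h1; exact hi hmin
      · simp at h
    · refine Set.disjoint_singleton_left.mpr ?_
      rintro (⟨j, hj, -⟩ | h)
      · simp at hj
      · simp at h
    · intro x hx y hy p hp hh hl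
      rw [Set.mem_singleton_iff] at hx hy
      subst hx; subst hy
      exact dsep_part1 hi hk p hp hh hl
  · intro i hi
    obtain ⟨k, hk, hreach⟩ := inMinSet_reach hi
    refine ⟨k, hk, fun hCI => ?_⟩
    have hZ : ∀ m ∈ (MinSet c t \ {DBNNode.latent i t}) ∪ {DBNNode.action t},
        tnode m = tnode (DBNNode.latent i t) := by
      rintro m (⟨hm, -⟩ | hm)
      · exact tnode_of_mem_minset hm
      · rw [hm]; rfl
    obtain ⟨p, hp, hh, hl, hnb⟩ := directed_unblocked _ hZ hreach
    have hd1 : Disjoint {DBNNode.latent i t} {DBNNode.reward (t + k)} :=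
      Set.disjoint_singleton_left.mpr (by simp)
    have hd2 : Disjoint {DBNNode.latent i t}
        ((MinSet c t \ {DBNNode.latent i t}) ∪ {DBNNode.action t}) := by
      refine Set.disjoint_singleton_left.mpr ?_
      rintro (⟨-, hne⟩ | h)
      · exact hne rfl
      · simp at h
    have hd3 : Disjoint {DBNNode.reward (t + k)}
        ((MinSet c t \ {DBNNode.latent i t}) ∪ {DBNNode.action t}) := by
      refine Set.disjoint_singleton_left.mpr ?_
      rintro (⟨⟨j, hj, -⟩, -⟩ | h)
      · simp at hj
      · simp at h
    have hdsep := hFaithful _ _ _ hd1 hd2 hd3 hCI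
    exact hnb (hdsep _ rfl _ rfl p hp hh hl)
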